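/- arXiv:math/0208159 — 3 statements merged into one kernel-verified Lean document; each statement's English description precedes it below -/
import Mathlib

section
/- Let ν be a complex number and suppose χ is a holomorphic function on a punctured disk {z : 0 < |z| < ε} satisfying χ'(z) + χ(z)² = ν² and lim_{z→0} z·χ(z) = 1. If ν ≠ 0, then χ(z) = ν·coth(νz) on some punctured neighborhood of 0; if ν = 0, then χ(z) = 1/z on some punctured neighborhood of 0. -/
open Complex Filter Topology Function

lemma analyticAt_update_of_tendsto {F : ℂ → ℂ} {a : ℂ}
    (hd : ∀ᶠ z in 𝓝[≠] (0:ℂ), DifferentiableAt ℂ F z)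
    (hl : Tendsto F (𝓝[≠] (0:ℂ)) (𝓝 a)) :
    AnalyticAt ℂ (Function.update F 0 a) 0 := by
  apply Complex.analyticAt_of_differentiable_on_punctured_nhds_of_continuousAt
  · filter_upwards [hd, self_mem_nhdsWithin] with z hz hz0
    have he : Function.update F 0 a =ᶠ[𝓝 z] F := by
      filter_upwards [eventually_ne_nhds hz0] with w hw
      exact Function.update_of_ne hw _ _
    exact (he.differentiableAt_iff (𝕜 := ℂ)).2 hz
  · exact continuousAt_update_same.2 hl

lemma keyA {W v : ℂ → ℂ}
    (hW : AnalyticAt ℂ W 0) (hW0 : W 0 = 0) (hW1 : deriv W 0 = 0)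
    (hv : ContinuousAt v 0) (hv0 : v 0 ≠ 0)
    (heq : ∀ᶠ z in 𝓝[≠] (0:ℂ), deriv W z * (z * v z) ^ 2 = - W z ^ 2) :
    ∀ᶠ z in 𝓝 (0:ℂ), W z = 0 := by
  by_cases htop : analyticOrderAt W 0 = ⊤
  · exact analyticOrderAt_eq_top.1 htop
  obtain ⟨n, hn⟩ := WithTop.ne_top_iff_exists.1 htop
  obtain ⟨g, hg, hg0, hWg⟩ := (hW.analyticOrderAt_eq_natCast (n := n)).1 hn.symm
  simp only [sub_zero, smul_eq_mul] at hWg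
  exfalso
  have hn0 : n ≠ 0 := by
    rintro rfl
    simp only [pow_zero, one_mul] at hWg
    exact hg0 (hWg.self_of_nhds ▸ hW0)
  have hn1 : n ≠ 1 := by
    rintro rfl
    have hd : HasDerivAt (fun z : ℂ => z ^ 1 * g z)
        (((1:ℕ):ℂ) * (0:ℂ) ^ 0 * g 0 + (0:ℂ) ^ 1 * deriv g 0) 0 :=
      (hasDerivAt_pow 1 (0:ℂ)).mul hg.differentiableAt.hasDerivAt
    have hWg2 : W =ᶠ[𝓝 (0:ℂ)] (fun z : ℂ => z ^ 1 * g z) := hWg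
    have h2 : deriv W 0 = deriv (fun z : ℂ => z ^ 1 * g z) 0 := hWg2.deriv_eq
    rw [hW1, hd.deriv] at h2
    simp at h2
    exact hg0 h2.symm
  obtain ⟨m, rfl⟩ : ∃ m, n = m + 2 := ⟨n - 2, by omega⟩
  have hWg' := hWg.eventually_nhds
  have hga := hg.eventually_analyticAt
  have hderiv : ∀ᶠ z in 𝓝 (0:ℂ),
      deriv W z = ((m+2:ℕ):ℂ) * z ^ (m+1) * g z + z ^ (m+2) * deriv g z := by
    filter_upwards [hWg', hga] with z hz hgz
    have h1 : HasDerivAt (fun w : ℂ => w ^ (m+2) * g w)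
        (((m+2:ℕ):ℂ) * z ^ (m+2-1) * g z + z ^ (m+2) * deriv g z) z :=
      (hasDerivAt_pow (m+2) z).mul hgz.differentiableAt.hasDerivAt
    have h2 : HasDerivAt W
        (((m+2:ℕ):ℂ) * z ^ (m+2-1) * g z + z ^ (m+2) * deriv g z) z :=
      h1.congr_of_eventuallyEq hz
    
    rw [h2.deriv]
    norm_num
  have hPQ : ∀ᶠ z in 𝓝[≠] (0:ℂ),
      (((m+2:ℕ):ℂ) * g z + z * deriv g z) * v z ^ 2 = -(z ^ (m+1) * g z ^ 2) := by
    filter_upwards [heq, hderiv.filter_mono nhdsWithin_le_nhds,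
      hWg.filter_mono nhdsWithin_le_nhds, self_mem_nhdsWithin] with z h1 h2 h3 hz0
    have hz0' : z ≠ 0 := hz0
    have hz : (z:ℂ) ^ (m+3) ≠ 0 := pow_ne_zero _ hz0'
    apply mul_left_cancel₀ hz
    calc z ^ (m+3) * ((((m+2:ℕ):ℂ) * g z + z * deriv g z) * v z ^ 2)
        = deriv W z * (z * v z) ^ 2 := by rw [h2]; push_cast; ring
      _ = - W z ^ 2 := h1
      _ = z ^ (m+3) * (-(z ^ (m+1) * g z ^ 2)) := by rw [h3]; ring
  have hdg : ContinuousAt (deriv g) 0 := by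
    have h := hg.fderiv.continuousAt
    have heq2 : deriv g = fun z => fderiv ℂ g z 1 := funext fun z => rfl
    rw [heq2]
    exact ((ContinuousLinearMap.apply ℂ ℂ (1:ℂ)).continuous.continuousAt.comp h)
  have hP : Tendsto (fun z : ℂ => (((m+2:ℕ):ℂ) * g z + z * deriv g z) * v z ^ 2)
      (𝓝[≠] (0:ℂ)) (𝓝 ((((m+2:ℕ):ℂ) * g 0 + 0 * deriv g 0) * v 0 ^ 2)) :=
    (((continuousAt_const.mul hg.continuousAt).add
      (continuousAt_id.mul hdg)).mul (hv.pow 2)).tendsto.mono_left nhdsWithin_le_nhds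
  have hQ : Tendsto (fun z : ℂ => -(z ^ (m+1) * g z ^ 2)) (𝓝[≠] (0:ℂ))
      (𝓝 (-((0:ℂ) ^ (m+1) * g 0 ^ 2))) :=
    (((continuousAt_pow _ _).mul (hg.continuousAt.pow 2)).neg).tendsto.mono_left
      nhdsWithin_le_nhds
  have := tendsto_nhds_unique (hP.congr' hPQ) hQ
  simp [pow_succ] at this
  rcases this with h | h
  · rcases h with h | h
    · exact (Nat.cast_ne_zero (R := ℂ)).2 (by omega : m + 2 ≠ 0) (by exact_mod_cast h)
    · exact hg0 h
  · exact hv0 h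
lemma keyB (c : ℂ) (χ f v : ℂ → ℂ)
    (hχ : ∀ᶠ z in 𝓝[≠] (0:ℂ), HasDerivAt χ (c - χ z ^ 2) z)
    (hf : ∀ᶠ z in 𝓝[≠] (0:ℂ), HasDerivAt f (c - f z ^ 2) z)
    (hv : AnalyticAt ℂ v 0) (hv0 : v 0 ≠ 0)
    (hs : ∀ᶠ z in 𝓝[≠] (0:ℂ), HasDerivAt (fun w => w * v w) (f z * (z * v z)) z)
    (hlim : Tendsto (fun z => z * (χ z - f z)) (𝓝[≠] (0:ℂ)) (𝓝 0)) :
    ∀ᶠ z in 𝓝[≠] (0:ℂ), χ z = f z := by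
  set w : ℂ → ℂ := fun z => (z * v z) ^ 2 * (χ z - f z) with hw
  set W := Function.update w 0 0 with hWdef
  have hwd : ∀ᶠ z in 𝓝[≠] (0:ℂ), HasDerivAt w
      (((2:ℕ):ℂ) * (z * v z) ^ 1 * (f z * (z * v z)) * (χ z - f z)
        + (z * v z) ^ 2 * ((c - χ z ^ 2) - (c - f z ^ 2))) z := by
    filter_upwards [hχ, hf, hs] with z h1 h2 h3
    exact (h3.pow 2).mul (h1.sub h2)
  have hWeq : ∀ᶠ z in 𝓝[≠] (0:ℂ), W z = w z := by
    filter_upwards [self_mem_nhdsWithin] with z hz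
    exact Function.update_of_ne hz _ _
  have hWd : ∀ᶠ z in 𝓝[≠] (0:ℂ), HasDerivAt W
      (((2:ℕ):ℂ) * (z * v z) ^ 1 * (f z * (z * v z)) * (χ z - f z)
        + (z * v z) ^ 2 * ((c - χ z ^ 2) - (c - f z ^ 2))) z := by
    filter_upwards [hwd, self_mem_nhdsWithin] with z h1 hz
    refine h1.congr_of_eventuallyEq ?_
    filter_upwards [eventually_ne_nhds hz] with u hu
    exact Function.update_of_ne hu _ _
  have heq : ∀ᶠ z in 𝓝[≠] (0:ℂ), deriv W z * (z * v z) ^ 2 = - W z ^ 2 := by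
    filter_upwards [hWd, hWeq] with z h1 h2
    rw [h1.deriv, h2, hw]
    push_cast
    ring
  have hvt : Tendsto v (𝓝[≠] (0:ℂ)) (𝓝 (v 0)) :=
    hv.continuousAt.continuousWithinAt
  have hslope : Tendsto (fun z => w z / z) (𝓝[≠] (0:ℂ)) (𝓝 0) := by
    have h1 : Tendsto (fun z : ℂ => v z ^ 2 * (z * (χ z - f z))) (𝓝[≠] (0:ℂ))
        (𝓝 (v 0 ^ 2 * 0)) := (hvt.pow 2).mul hlim
    rw [mul_zero] at h1
    refine h1.congr' ?_
    filter_upwards [self_mem_nhdsWithin] with z hz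
    have hz' : (z:ℂ) ≠ 0 := hz
    rw [hw]
    field_simp
  have hwt : Tendsto w (𝓝[≠] (0:ℂ)) (𝓝 0) := by
    have h1 : Tendsto (fun z : ℂ => z * (w z / z)) (𝓝[≠] (0:ℂ)) (𝓝 (0 * 0)) :=
      (tendsto_id.mono_left nhdsWithin_le_nhds).mul hslope
    rw [mul_zero] at h1
    refine h1.congr' ?_
    filter_upwards [self_mem_nhdsWithin] with z hz
    have hz' : (z:ℂ) ≠ 0 := hz
    field_simp
  have hWa : AnalyticAt ℂ W 0 :=
    analyticAt_update_of_tendsto (hwd.mono fun z h => h.differentiableAt) hwt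
  have hW0 : W 0 = 0 := Function.update_self _ _ _
  have hWd0 : HasDerivAt W 0 0 := by
    rw [hasDerivAt_iff_tendsto_slope]
    refine hslope.congr' ?_
    filter_upwards [hWeq, self_mem_nhdsWithin] with z h1 hz
    simp [slope, hW0, h1, div_eq_inv_mul]
  have hzero := keyA hWa hW0 hWd0.deriv hv.continuousAt hv0 heq
  have hvne : ∀ᶠ z in 𝓝[≠] (0:ℂ), v z ≠ 0 := hvt.eventually_ne hv0
  filter_upwards [hzero.filter_mono nhdsWithin_le_nhds, hWeq, hvne,
    self_mem_nhdsWithin] with z h1 h2 h3 hz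
  have hz' : (z:ℂ) ≠ 0 := hz
  have h4 : (z * v z) ^ 2 * (χ z - f z) = 0 := by rw [h2] at h1; exact h1
  have h5 : (z * v z) ^ 2 ≠ 0 := pow_ne_zero _ (mul_ne_zero hz' h3)
  have := (mul_eq_zero.1 h4).resolve_left h5
  exact sub_eq_zero.1 this
lemma eventually_to_delta {p : ℂ → Prop} (h : ∀ᶠ z in 𝓝[≠] (0:ℂ), p z) :
    ∃ δ > 0, ∀ z : ℂ, 0 < ‖z‖ → ‖z‖ < δ → p z := by
  rw [eventually_nhdsWithin_iff] at h
  rcases Metric.eventually_nhds_iff.1 h with ⟨δ, hδ, H⟩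
  refine ⟨δ, hδ, fun z h0 hδ' => ?_⟩
  have hz : z ≠ 0 := by
    intro hz0; rw [hz0] at h0; simp at h0
  exact H (by simpa [Complex.dist_eq] using hδ') hz

lemma sinh_div_tendsto : Tendsto (fun w : ℂ => Complex.sinh w / w) (𝓝[≠] (0:ℂ)) (𝓝 1) := by
  have h := hasDerivAt_iff_tendsto_slope.1 (Complex.hasDerivAt_sinh 0)
  rw [Complex.cosh_zero] at h
  refine h.congr' ?_
  filter_upwards [self_mem_nhdsWithin] with z hz
  simp [slope, Complex.sinh_zero, div_eq_inv_mul]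

noncomputable def coth (z : ℂ) : ℂ := Complex.cosh z / Complex.sinh z

/-- Uniqueness for the Riccati equation χ' + χ² = ν² with z·χ(z) → 1. -/
theorem stmt4 (ν : ℂ) (χ : ℂ → ℂ) (ε : ℝ) (hε : 0 < ε)
    (hdiff : ∀ z : ℂ, 0 < ‖z‖ → ‖z‖ < ε →
      HasDerivAt χ (ν ^ 2 - χ z ^ 2) z)
    (hlim : Tendsto (fun z : ℂ => z * χ z) (𝓝[≠] (0 : ℂ)) (𝓝 1)) :
    (ν ≠ 0 → ∃ δ > 0, ∀ z : ℂ, 0 < ‖z‖ → ‖z‖ < δ →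
        χ z = ν * coth (ν * z)) ∧
    (ν = 0 → ∃ δ > 0, ∀ z : ℂ, 0 < ‖z‖ → ‖z‖ < δ →
        χ z = 1 / z) := by
  have hχ : ∀ᶠ z in 𝓝[≠] (0:ℂ), HasDerivAt χ (ν ^ 2 - χ z ^ 2) z := by
    rw [eventually_nhdsWithin_iff]
    have h1 : ∀ᶠ z in 𝓝 (0:ℂ), ‖z‖ < ε := by
      rw [Metric.eventually_nhds_iff]
      exact ⟨ε, hε, fun z hz => by simpa [Complex.dist_eq] using hz⟩
    filter_upwards [h1] with z h2 h3
    exact hdiff z (by simpa using h3) h2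
  constructor
  · -- ν ≠ 0
    intro hν
    have hmap : Tendsto (fun z : ℂ => ν * z) (𝓝[≠] (0:ℂ)) (𝓝[≠] (0:ℂ)) := by
      rw [tendsto_nhdsWithin_iff]
      constructor
      · have h1 : Tendsto (fun z : ℂ => ν * z) (𝓝 (0:ℂ)) (𝓝 (ν * 0)) :=
          (continuous_const.mul continuous_id).tendsto 0
        rw [mul_zero] at h1
        exact h1.mono_left nhdsWithin_le_nhds
      · filter_upwards [self_mem_nhdsWithin] with z hz
        have hz' : (z:ℂ) ≠ 0 := hz
        simpa using mul_ne_zero hν hz'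
    have hsν : Tendsto (fun z : ℂ => Complex.sinh (ν*z) / (ν*z)) (𝓝[≠] (0:ℂ)) (𝓝 1) :=
      sinh_div_tendsto.comp hmap
    have hsinh_ne : ∀ᶠ z in 𝓝[≠] (0:ℂ), Complex.sinh (ν*z) ≠ 0 := by
      filter_upwards [hsν.eventually_ne one_ne_zero] with z hz
      intro h
      exact hz (by simp [h])
    set v : ℂ → ℂ := Function.update (fun z : ℂ => Complex.sinh (ν*z) / z) 0 ν with hvdef
    have hvlim : Tendsto (fun z : ℂ => Complex.sinh (ν*z) / z) (𝓝[≠] (0:ℂ)) (𝓝 ν) := by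
      have h1 : Tendsto (fun z : ℂ => ν * (Complex.sinh (ν*z) / (ν*z))) (𝓝[≠] (0:ℂ))
          (𝓝 (ν * 1)) := tendsto_const_nhds.mul hsν
      rw [mul_one] at h1
      refine h1.congr' ?_
      filter_upwards [self_mem_nhdsWithin] with z hz
      have hz' : (z:ℂ) ≠ 0 := hz
      field_simp
    have hv : AnalyticAt ℂ v 0 := by
      apply analyticAt_update_of_tendsto _ hvlim
      filter_upwards [self_mem_nhdsWithin] with z hz
      have hz' : (z:ℂ) ≠ 0 := hz
      exact (Complex.differentiable_sinh.comp
        (differentiable_id.const_mul ν)).differentiableAt.div differentiableAt_id hz'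
    have hv0 : v 0 = ν := Function.update_self _ _ _
    have hsvz : ∀ z : ℂ, z * v z = Complex.sinh (ν * z) := by
      intro z
      by_cases hz : z = 0
      · simp [hz, hvdef]
      · rw [hvdef]
        simp only [Function.update_of_ne hz]
        field_simp
    set f : ℂ → ℂ := fun z => ν * coth (ν * z) with hfdef
    have hcoshd : ∀ z : ℂ, HasDerivAt (fun y : ℂ => Complex.cosh (ν*y))
        (ν * Complex.sinh (ν*z)) z := by
      intro z
      have h0 : HasDerivAt (fun y : ℂ => ν * y) ν z := by
        simpa using (hasDerivAt_id z).const_mul ν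
      simpa [mul_comm, Function.comp_def] using (Complex.hasDerivAt_cosh (ν*z)).comp z h0
    have hsinhd : ∀ z : ℂ, HasDerivAt (fun y : ℂ => Complex.sinh (ν*y))
        (ν * Complex.cosh (ν*z)) z := by
      intro z
      have h0 : HasDerivAt (fun y : ℂ => ν * y) ν z := by
        simpa using (hasDerivAt_id z).const_mul ν
      simpa [mul_comm, Function.comp_def] using (Complex.hasDerivAt_sinh (ν*z)).comp z h0
    have hf : ∀ᶠ z in 𝓝[≠] (0:ℂ), HasDerivAt f (ν ^ 2 - f z ^ 2) z := by
      filter_upwards [hsinh_ne] with z hz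
      have h3 := ((hcoshd z).div (hsinhd z) hz).const_mul ν
      have hfeq : f = fun y : ℂ => ν * (Complex.cosh (ν*y) / Complex.sinh (ν*y)) := by
        funext y; rw [hfdef]; simp [coth]
      rw [hfeq]
      refine h3.congr_deriv ?_
      beta_reduce
      field_simp
    have hs : ∀ᶠ z in 𝓝[≠] (0:ℂ),
        HasDerivAt (fun w => w * v w) (f z * (z * v z)) z := by
      filter_upwards [hsinh_ne] with z hz
      have h1 : (fun w : ℂ => w * v w) = fun w : ℂ => Complex.sinh (ν * w) :=
        funext hsvz
      rw [h1, hsvz z]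
      have h2 : f z * Complex.sinh (ν*z) = ν * Complex.cosh (ν*z) := by
        rw [hfdef]; simp only [coth]; field_simp
      rw [h2]
      exact hsinhd z
    have hlim2 : Tendsto (fun z => z * (χ z - f z)) (𝓝[≠] (0:ℂ)) (𝓝 0) := by
      have hzf : Tendsto (fun z : ℂ => z * f z) (𝓝[≠] (0:ℂ)) (𝓝 1) := by
        have hcosh : Tendsto (fun z : ℂ => Complex.cosh (ν*z)) (𝓝[≠] (0:ℂ)) (𝓝 1) := by
          have h1 : Tendsto (fun z : ℂ => Complex.cosh (ν*z)) (𝓝 (0:ℂ))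
              (𝓝 (Complex.cosh (ν*0))) :=
            (Complex.continuous_cosh.comp (continuous_const.mul continuous_id)).tendsto 0
          simpa using h1.mono_left nhdsWithin_le_nhds
        have h4 : Tendsto (fun z : ℂ => Complex.cosh (ν*z) / (Complex.sinh (ν*z)/(ν*z)))
            (𝓝[≠] (0:ℂ)) (𝓝 (1/1)) := hcosh.div hsν one_ne_zero
        rw [div_one] at h4
        refine h4.congr' ?_
        filter_upwards [hsinh_ne, self_mem_nhdsWithin] with z hz hz0
        have hz' : (z:ℂ) ≠ 0 := hz0
        rw [hfdef]
        simp only [coth]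
        field_simp
      have h5 : Tendsto (fun z : ℂ => z * χ z - z * f z) (𝓝[≠] (0:ℂ)) (𝓝 (1 - 1)) :=
        hlim.sub hzf
      rw [sub_self] at h5
      refine h5.congr ?_
      intro z; ring
    have hveq := keyB (ν^2) χ f v hχ hf hv (by rw [hv0]; exact hν) hs hlim2
    exact eventually_to_delta hveq
  · -- ν = 0
    intro hν
    subst hν
    set f : ℂ → ℂ := fun z => 1 / z with hfdef
    have hf : ∀ᶠ z in 𝓝[≠] (0:ℂ), HasDerivAt f ((0:ℂ) ^ 2 - f z ^ 2) z := by
      filter_upwards [self_mem_nhdsWithin] with z hz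
      have hz' : (z:ℂ) ≠ 0 := hz
      have h1 := hasDerivAt_inv hz'
      have h2 : f = fun y : ℂ => y⁻¹ := by funext y; rw [hfdef]; simp [one_div]
      rw [h2]
      refine h1.congr_deriv ?_
      beta_reduce
      field_simp
      ring
    have hs : ∀ᶠ z in 𝓝[≠] (0:ℂ),
        HasDerivAt (fun w : ℂ => w * (fun _ : ℂ => (1:ℂ)) w) (f z * (z * (fun _ : ℂ => (1:ℂ)) z)) z := by
      filter_upwards [self_mem_nhdsWithin] with z hz
      have hz' : (z:ℂ) ≠ 0 := hz
      have h1 : (fun w : ℂ => w * (fun _ : ℂ => (1:ℂ)) w) = fun w : ℂ => w := by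
        funext w; simp
      rw [h1]
      have h2 : f z * (z * (fun _ : ℂ => (1:ℂ)) z) = 1 := by
        rw [hfdef]; field_simp
      rw [h2]
      exact hasDerivAt_id z
    have hlim2 : Tendsto (fun z => z * (χ z - f z)) (𝓝[≠] (0:ℂ)) (𝓝 0) := by
      have h5 : Tendsto (fun z : ℂ => z * χ z - 1) (𝓝[≠] (0:ℂ)) (𝓝 (1 - 1)) :=
        hlim.sub tendsto_const_nhds
      rw [sub_self] at h5
      refine h5.congr' ?_
      filter_upwards [self_mem_nhdsWithin] with z hz
      have hz' : (z:ℂ) ≠ 0 := hz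
      rw [hfdef]
      field_simp
    have hveq := keyB ((0:ℂ)^2) χ f (fun _ => (1:ℂ)) (by simpa using hχ) hf
      analyticAt_const one_ne_zero hs hlim2
    exact eventually_to_delta hveq
end

section
/- Let ν be a nonzero complex number, μ = 1/4 − ν², θ(z) = (1/2)·coth(z/2), and F(z) = ν·coth(νz) − θ(z). Then for all complex z, w such that z, w, and z+w all satisfy sinh(·/2) ≠ 0 and sinh(ν·) ≠ 0, the functional equation F(z)F(w) − F(z+w)(F(z)+F(w)) − θ(z)(F(z+w)−F(w)) − θ(w)(F(z+w)−F(z)) − θ(z+w)(F(z)+F(w)) − μ = 0 holds. -/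
open Complex

noncomputable def theta (z : ℂ) : ℂ := (1 / 2 : ℂ) * coth (z / 2)

noncomputable def F (ν z : ℂ) : ℂ := ν * coth (ν * z) - theta z

lemma exp_sq_sub_one_ne (x : ℂ) (h : Complex.sinh x ≠ 0) :
    Complex.exp x ^ 2 - 1 ≠ 0 := by
  intro hh
  apply h
  rw [Complex.sinh, Complex.exp_neg]
  have he : Complex.exp x ≠ 0 := Complex.exp_ne_zero x
  field_simp
  linear_combination hh

lemma coth_exp (x : ℂ) (h : Complex.sinh x ≠ 0) :
    coth x = (Complex.exp x ^ 2 + 1) / (Complex.exp x ^ 2 - 1) := by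
  have he : Complex.exp x ≠ 0 := Complex.exp_ne_zero x
  have h2 := exp_sq_sub_one_ne x h
  rw [coth, div_eq_div_iff h h2, Complex.cosh, Complex.sinh, Complex.exp_neg]
  field_simp

lemma add_law (a b : ℂ) (ha : a - 1 ≠ 0) (hb : b - 1 ≠ 0)
    (hab : a * b - 1 ≠ 0) :
    (a * b + 1) / (a * b - 1)
      = (1 + (a + 1) / (a - 1) * ((b + 1) / (b - 1)))
        / ((a + 1) / (a - 1) + (b + 1) / (b - 1)) := by
  have h : (a + 1) / (a - 1) + (b + 1) / (b - 1)
      = 2 * (a * b - 1) / ((a - 1) * (b - 1)) := by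
    field_simp; ring
  rw [h, div_eq_div_iff hab (div_ne_zero (mul_ne_zero two_ne_zero hab)
    (mul_ne_zero ha hb))]
  field_simp
  ring

lemma sum_ne (a b : ℂ) (ha : a - 1 ≠ 0) (hb : b - 1 ≠ 0)
    (hab : a * b - 1 ≠ 0) :
    (a + 1) / (a - 1) + (b + 1) / (b - 1) ≠ 0 := by
  have h : (a + 1) / (a - 1) + (b + 1) / (b - 1)
      = 2 * (a * b - 1) / ((a - 1) * (b - 1)) := by
    field_simp; ring
  rw [h]
  exact div_ne_zero (mul_ne_zero two_ne_zero hab) (mul_ne_zero ha hb)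

set_option maxHeartbeats 4000000 in
lemma key2 (ν T1 T2 S1 S2 : ℂ) (hT : T1 + T2 ≠ 0) (hS : S1 + S2 ≠ 0) :
    (ν * S1 - 1 / 2 * T1) * (ν * S2 - 1 / 2 * T2)
      - (ν * ((1 + S1 * S2) / (S1 + S2)) - 1 / 2 * ((1 + T1 * T2) / (T1 + T2))) *
        ((ν * S1 - 1 / 2 * T1) + (ν * S2 - 1 / 2 * T2))
      - 1 / 2 * T1 *
        ((ν * ((1 + S1 * S2) / (S1 + S2)) - 1 / 2 * ((1 + T1 * T2) / (T1 + T2))) -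
         (ν * S2 - 1 / 2 * T2))
      - 1 / 2 * T2 *
        ((ν * ((1 + S1 * S2) / (S1 + S2)) - 1 / 2 * ((1 + T1 * T2) / (T1 + T2))) -
         (ν * S1 - 1 / 2 * T1))
      - 1 / 2 * ((1 + T1 * T2) / (T1 + T2)) *
        ((ν * S1 - 1 / 2 * T1) + (ν * S2 - 1 / 2 * T2))
      - (1 / 4 - ν ^ 2) = 0 := by
  have hP : (1 + T1 * T2) / (T1 + T2) * (T1 + T2) = 1 + T1 * T2 :=
    div_mul_cancel₀ _ hT
  have hQ : (1 + S1 * S2) / (S1 + S2) * (S1 + S2) = 1 + S1 * S2 :=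
    div_mul_cancel₀ _ hS
  linear_combination (1 / 4 : ℂ) * hP - ν ^ 2 * hQ

lemma key (ν a b c d : ℂ) (k1 : a - 1 ≠ 0) (k2 : b - 1 ≠ 0)
    (k3 : c - 1 ≠ 0) (k4 : d - 1 ≠ 0) (k5 : a * b - 1 ≠ 0)
    (k6 : c * d - 1 ≠ 0) :
    (ν * ((c + 1) / (c - 1)) - 1 / 2 * ((a + 1) / (a - 1))) *
        (ν * ((d + 1) / (d - 1)) - 1 / 2 * ((b + 1) / (b - 1)))
      - (ν * ((c * d + 1) / (c * d - 1)) - 1 / 2 * ((a * b + 1) / (a * b - 1))) *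
        ((ν * ((c + 1) / (c - 1)) - 1 / 2 * ((a + 1) / (a - 1))) +
         (ν * ((d + 1) / (d - 1)) - 1 / 2 * ((b + 1) / (b - 1))))
      - 1 / 2 * ((a + 1) / (a - 1)) *
        ((ν * ((c * d + 1) / (c * d - 1)) - 1 / 2 * ((a * b + 1) / (a * b - 1))) -
         (ν * ((d + 1) / (d - 1)) - 1 / 2 * ((b + 1) / (b - 1))))
      - 1 / 2 * ((b + 1) / (b - 1)) *
        ((ν * ((c * d + 1) / (c * d - 1)) - 1 / 2 * ((a * b + 1) / (a * b - 1))) -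
         (ν * ((c + 1) / (c - 1)) - 1 / 2 * ((a + 1) / (a - 1))))
      - 1 / 2 * ((a * b + 1) / (a * b - 1)) *
        ((ν * ((c + 1) / (c - 1)) - 1 / 2 * ((a + 1) / (a - 1))) +
         (ν * ((d + 1) / (d - 1)) - 1 / 2 * ((b + 1) / (b - 1))))
      - (1 / 4 - ν ^ 2) = 0 := by
  rw [add_law a b k1 k2 k5, add_law c d k3 k4 k6]
  exact key2 ν _ _ _ _ (sum_ne a b k1 k2 k5) (sum_ne c d k3 k4 k6)

set_option maxHeartbeats 2000000 in
/-- The functional equation arising from the PL-CDYBE. -/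
theorem stmt8 (ν : ℂ) (hν : ν ≠ 0) (z w : ℂ)
    (hz1 : Complex.sinh (z / 2) ≠ 0) (hz2 : Complex.sinh (ν * z) ≠ 0)
    (hw1 : Complex.sinh (w / 2) ≠ 0) (hw2 : Complex.sinh (ν * w) ≠ 0)
    (hzw1 : Complex.sinh ((z + w) / 2) ≠ 0)
    (hzw2 : Complex.sinh (ν * (z + w)) ≠ 0) :
    F ν z * F ν w - F ν (z + w) * (F ν z + F ν w)
      - theta z * (F ν (z + w) - F ν w)
      - theta w * (F ν (z + w) - F ν z)
      - theta (z + w) * (F ν z + F ν w)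
      - (1 / 4 - ν ^ 2) = 0 := by
  have e1 : (z + w) / 2 = z / 2 + w / 2 := by ring
  have e2 : ν * (z + w) = ν * z + ν * w := by ring
  have k1 := exp_sq_sub_one_ne _ hz1
  have k2 := exp_sq_sub_one_ne _ hw1
  have k3 := exp_sq_sub_one_ne _ hz2
  have k4 := exp_sq_sub_one_ne _ hw2
  have k5 := exp_sq_sub_one_ne _ hzw1
  have k6 := exp_sq_sub_one_ne _ hzw2
  rw [e1] at k5
  rw [e2] at k6
  rw [Complex.exp_add, mul_pow] at k5 k6
  have eab : Complex.exp ((z + w) / 2) ^ 2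
      = Complex.exp (z / 2) ^ 2 * Complex.exp (w / 2) ^ 2 := by
    rw [e1, Complex.exp_add, mul_pow]
  have ecd : Complex.exp (ν * (z + w)) ^ 2
      = Complex.exp (ν * z) ^ 2 * Complex.exp (ν * w) ^ 2 := by
    rw [e2, Complex.exp_add, mul_pow]
  simp only [F, theta, coth_exp _ hz1, coth_exp _ hz2, coth_exp _ hw1,
    coth_exp _ hw2, coth_exp _ hzw1, coth_exp _ hzw2, eab, ecd]
  exact key ν _ _ _ _ k1 k2 k3 k4 k5 k6
end

section
/- Suppose F is an odd holomorphic function on a disk {|z| < ε} with F(0) = 0, θ(z) = (1/2)coth(z/2), and F satisfies both the differential equation F' + 2θF + F² + μ = 0 and the functional equation F(z)F(w) − F(z+w)(F(z)+F(w)) − θ(z)(F(z+w)−F(w)) − θ(w)(F(z+w)−F(z)) − θ(z+w)(F(z)+F(w)) = μ on their common domain, with μ = 1/4 − ν², ν ≠ 0. Then F(z) = ν·coth(νz) − (1/2)coth(z/2) on a punctured neighborhood of 0. -/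
open Complex Filter Topology

lemma sinh_ne_zero_of_abs_lt_pi {w : ℂ} (h0 : w ≠ 0) (h : ‖w‖ < Real.pi) :
    Complex.sinh w ≠ 0 := by
  intro hs
  have h1 : Complex.sin (w * Complex.I) = 0 := by rw [Complex.sin_mul_I, hs, zero_mul]
  rw [Complex.sin_eq_zero_iff] at h1
  obtain ⟨k, hk⟩ := h1
  have hk0 : k ≠ 0 := by
    rintro rfl
    simp only [Int.cast_zero, zero_mul] at hk
    exact h0 (by simpa [Complex.I_ne_zero] using mul_eq_zero.mp hk)
  have habs : ‖w‖ = |(k : ℝ)| * Real.pi := by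
    have h2 : ‖w * Complex.I‖ = ‖(k : ℂ) * (Real.pi : ℂ)‖ := by rw [hk]
    simpa [_root_.abs_of_nonneg Real.pi_pos.le] using h2
  have h1k : (1 : ℝ) ≤ |(k : ℝ)| := by exact_mod_cast Int.one_le_abs hk0
  nlinarith [Real.pi_pos]

/-- Uniqueness (Proposition 2, scalar level): an odd holomorphic F near 0 with
F(0) = 0 satisfying the differential equation F' + 2θF + F² + μ = 0 and the
functional equation, with μ = 1/4 − ν², ν ≠ 0, equals ν·coth(νz) − (1/2)coth(z/2)
near 0. -/
theorem stmt19 (F : ℂ → ℂ) (μ ν : ℂ) (hν : ν ≠ 0) (hμν : μ = 1 / 4 - ν ^ 2)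
    (ε : ℝ) (hε : 0 < ε)
    (hdiff : ∀ z : ℂ, ‖z‖ < ε → DifferentiableAt ℂ F z)
    (hodd : ∀ z : ℂ, F (-z) = -F z) (h0 : F 0 = 0)
    (hde : ∀ z : ℂ, 0 < ‖z‖ → ‖z‖ < ε →
      Complex.sinh (z / 2) ≠ 0 →
      HasDerivAt F (-(2 * theta z * F z + F z ^ 2 + μ)) z)
    (hfe : ∀ z w : ℂ, ‖z‖ < ε → ‖w‖ < ε →
      ‖z + w‖ < ε →
      Complex.sinh (z / 2) ≠ 0 → Complex.sinh (w / 2) ≠ 0 →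
      Complex.sinh ((z + w) / 2) ≠ 0 →
      F z * F w - F (z + w) * (F z + F w)
        - theta z * (F (z + w) - F w)
        - theta w * (F (z + w) - F z)
        - theta (z + w) * (F z + F w) = μ) :
    ∃ δ > 0, ∀ z : ℂ, 0 < ‖z‖ → ‖z‖ < δ →
      F z = ν * coth (ν * z) - (1 / 2 : ℂ) * coth (z / 2) := by
  have hπ := Real.pi_pos
  have hνa : 0 < ‖ν‖ := by simpa using hν
  set δ : ℝ := min ε (min Real.pi (Real.pi / ‖ν‖)) with hδdef
  have hδpos : 0 < δ := lt_min hε (lt_min hπ (div_pos hπ hνa))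
  have hδε : δ ≤ ε := min_le_left _ _
  refine ⟨δ, hδpos, ?_⟩
  -- the auxiliary function W
  set W : ℂ → ℂ := fun z => F z * Complex.sinh (ν * z) * Complex.sinh (z / 2) -
      (ν * Complex.cosh (ν * z) * Complex.sinh (z / 2) -
        (1 / 2 : ℂ) * Complex.cosh (z / 2) * Complex.sinh (ν * z)) with hWdef
  have hW0 : W 0 = 0 := by simp [hWdef]
  -- non-vanishing of the sinh's
  have hq0 : ∀ z : ℂ, z ≠ 0 → ‖z‖ < δ → Complex.sinh (z / 2) ≠ 0 := by
    intro z hz hzδ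
    apply sinh_ne_zero_of_abs_lt_pi (by simpa using hz)
    have h1 : ‖z‖ < Real.pi :=
      lt_of_lt_of_le hzδ (le_trans (min_le_right _ _) (min_le_left _ _))
    calc ‖z / 2‖ = ‖z‖ / 2 := by simp
    _ < Real.pi := by linarith
  have hp0 : ∀ z : ℂ, z ≠ 0 → ‖z‖ < δ → Complex.sinh (ν * z) ≠ 0 := by
    intro z hz hzδ
    apply sinh_ne_zero_of_abs_lt_pi (mul_ne_zero hν hz)
    have h1 : ‖z‖ < Real.pi / ‖ν‖ :=
      lt_of_lt_of_le hzδ (le_trans (min_le_right _ _) (min_le_right _ _))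
    calc ‖ν * z‖ = ‖ν‖ * ‖z‖ := by simp
    _ < ‖ν‖ * (Real.pi / ‖ν‖) := mul_lt_mul_of_pos_left h1 hνa
    _ = Real.pi := by field_simp
  -- derivative building blocks
  have hp' : ∀ z : ℂ, HasDerivAt (fun z => Complex.sinh (ν * z)) (ν * Complex.cosh (ν * z)) z := by
    intro z
    have := (Complex.hasDerivAt_sinh (ν * z)).comp z ((hasDerivAt_id z).const_mul ν)
    simpa [mul_comm, Function.comp_def] using this
  have hq' : ∀ z : ℂ, HasDerivAt (fun z => Complex.sinh (z / 2))
      (Complex.cosh (z / 2) * (1 / 2)) z := by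
    intro z
    have := (Complex.hasDerivAt_sinh (z / 2)).comp z ((hasDerivAt_id z).div_const 2)
    simpa [Function.comp_def] using this
  have hpc' : ∀ z : ℂ, HasDerivAt (fun z => Complex.cosh (ν * z)) (ν * Complex.sinh (ν * z)) z := by
    intro z
    have := (Complex.hasDerivAt_cosh (ν * z)).comp z ((hasDerivAt_id z).const_mul ν)
    simpa [mul_comm, Function.comp_def] using this
  have hqc' : ∀ z : ℂ, HasDerivAt (fun z => Complex.cosh (z / 2))
      (Complex.sinh (z / 2) * (1 / 2)) z := by
    intro z
    have := (Complex.hasDerivAt_cosh (z / 2)).comp z ((hasDerivAt_id z).div_const 2)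
    simpa [Function.comp_def] using this
  -- W satisfies W' = -F W on the disk
  have hWd : ∀ z : ℂ, ‖z‖ < δ → HasDerivAt W (-F z * W z) z := by
    intro z hzδ
    by_cases hz : z = 0
    · subst hz
      have hF0 : HasDerivAt F (deriv F 0) 0 := (hdiff 0 (by simpa using hε)).hasDerivAt
      have h1 : HasDerivAt W _ 0 := ((hF0.mul (hp' 0)).mul (hq' 0)).sub
        ((((hpc' 0).const_mul ν).mul (hq' 0)).sub (((hqc' 0).const_mul (1/2 : ℂ)).mul (hp' 0)))
      convert h1 using 1
      simp [hWdef, h0]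
      ring
    · have hzpos : 0 < ‖z‖ := by simpa using hz
      have hq0z := hq0 z hz hzδ
      have hF' := hde z hzpos (lt_of_lt_of_le hzδ hδε) hq0z
      have h1 : HasDerivAt W _ z := ((hF'.mul (hp' z)).mul (hq' z)).sub
        ((((hpc' z).const_mul ν).mul (hq' z)).sub (((hqc' z).const_mul (1/2 : ℂ)).mul (hp' z)))
      convert h1 using 1
      have hc : theta z * Complex.sinh (z / 2) = 1 / 2 * Complex.cosh (z / 2) := by
        rw [theta, coth]
        field_simp
      simp only [hWdef, hμν, Pi.mul_apply]
      linear_combination (2 * F z * Complex.sinh (ν * z)) * hc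
  -- Gronwall: W vanishes on the disk
  have hWzero : ∀ z : ℂ, ‖z‖ < δ → W z = 0 := by
    intro z hzδ
    have hsub : ∀ t : ℝ, t ∈ Set.Icc (0:ℝ) 1 → ‖(t : ℂ) * z‖ < δ := by
      intro t ht
      have he : ‖(t : ℂ) * z‖ = |t| * ‖z‖ := by
        simp [Complex.norm_real]
      rw [he, _root_.abs_of_nonneg ht.1]
      calc t * ‖z‖ ≤ 1 * ‖z‖ :=
            mul_le_mul_of_nonneg_right ht.2 (norm_nonneg z)
      _ = ‖z‖ := one_mul _
      _ < δ := hzδ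
    have hcont : ContinuousOn (fun x : ℂ => z * F x) (Metric.closedBall 0 (‖z‖)) := by
      intro x hx
      have hxε : ‖x‖ < ε := by
        have := Metric.mem_closedBall.mp hx
        simp only [dist_zero_right] at this
        exact lt_of_le_of_lt this (lt_of_lt_of_le hzδ hδε)
      exact (continuousAt_const.mul (hdiff x hxε).continuousAt).continuousWithinAt
    obtain ⟨C, hC⟩ :=
      (isCompact_closedBall (0:ℂ) (‖z‖)).exists_bound_of_continuousOn hcont
    set K : NNReal := Real.toNNReal C with hKdef
    set pr : ℝ → ℝ := fun t => max 0 (min t 1) with hprdef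
    have hprmem : ∀ t : ℝ, ((pr t : ℝ) : ℂ) * z ∈ Metric.closedBall (0:ℂ) (‖z‖) := by
      intro t
      simp only [Metric.mem_closedBall, dist_zero_right]
      have h1 : (0:ℝ) ≤ pr t := le_max_left _ _
      have h2 : pr t ≤ 1 := max_le (by norm_num) (min_le_right _ _)
      calc ‖((pr t : ℝ) : ℂ) * z‖ = |pr t| * ‖z‖ := by
            simp [Complex.norm_real]
      _ = pr t * ‖z‖ := by rw [_root_.abs_of_nonneg h1]
      _ ≤ 1 * ‖z‖ := mul_le_mul_of_nonneg_right h2 (norm_nonneg z)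
      _ = ‖z‖ := one_mul _
    set v : ℝ → ℂ → ℂ := fun t x => -(z * F (((pr t : ℝ) : ℂ) * z)) * x with hvdef
    have hv : ∀ t, LipschitzWith K (v t) := by
      intro t
      apply LipschitzWith.of_dist_le_mul
      intro x y
      have hb := hC _ (hprmem t)
      calc dist (v t x) (v t y) = ‖z * F (((pr t : ℝ) : ℂ) * z)‖ * dist x y := by
            simp only [hvdef, dist_eq_norm, ← mul_sub, norm_mul, norm_neg]
      _ ≤ (K : ℝ) * dist x y := by
            apply mul_le_mul_of_nonneg_right _ dist_nonneg
            exact le_trans hb (Real.le_coe_toNNReal C)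
    set f : ℝ → ℂ := fun t => W ((t : ℂ) * z) with hfdef
    have hfd : ∀ t : ℝ, t ∈ Set.Icc (0:ℝ) 1 →
        HasDerivAt f (-F ((t : ℂ) * z) * W ((t : ℂ) * z) * z) t := by
      intro t ht
      have htδ : ‖(t : ℂ) * z‖ < δ := hsub t ht
      have h1 : HasDerivAt (fun w : ℂ => W (w * z))
          (-F ((t : ℂ) * z) * W ((t : ℂ) * z) * z) (t : ℂ) := by
        simpa [Function.comp_def] using (hWd _ htδ).comp (t : ℂ) (hasDerivAt_mul_const z)
      exact h1.comp_ofReal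
    have hfc : ContinuousOn f (Set.Icc (0:ℝ) 1) := fun t ht =>
      (hfd t ht).continuousAt.continuousWithinAt
    have hf' : ∀ t ∈ Set.Ico (0:ℝ) 1, HasDerivWithinAt f (v t (f t)) (Set.Ici t) t := by
      intro t ht
      have h2 := hfd t ⟨ht.1, ht.2.le⟩
      have hpr : pr t = t := by
        simp only [hprdef]
        rw [min_eq_left ht.2.le, max_eq_right ht.1]
      have h3 : v t (f t) = -F ((t : ℂ) * z) * W ((t : ℂ) * z) * z := by
        simp only [hvdef, hfdef, hpr]
        ring
      rw [h3]
      exact h2.hasDerivWithinAt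
    have hg' : ∀ t ∈ Set.Ico (0:ℝ) 1,
        HasDerivWithinAt (fun _ : ℝ => (0:ℂ)) (v t 0) (Set.Ici t) t := by
      intro t _
      simpa [hvdef] using (hasDerivWithinAt_const t (Set.Ici t) (0:ℂ))
    have ha : f 0 = (fun _ : ℝ => (0:ℂ)) 0 := by
      simp [hfdef, hW0]
    have := ODE_solution_unique hv hfc hf' continuousOn_const hg' ha
      (Set.mem_Icc.mpr ⟨zero_le_one, le_rfl⟩)
    simpa [hfdef] using this
  -- conclusion
  intro z hz0 hzδ
  have hzne : z ≠ 0 := by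
    intro h; rw [h] at hz0; simp at hz0
  have hW := hWzero z hzδ
  have hp := hp0 z hzne hzδ
  have hq := hq0 z hzne hzδ
  simp only [hWdef] at hW
  rw [coth, coth]
  field_simp
  linear_combination 2 * hW
end
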